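/- (Dual Reimer inequality for increasing events) For increasing events A, B ⊆ {0,1}^n, P[(A,B) occurs disjointly on (ω, ξ)] ≤ P[A ∩ B̄], where ω, ξ are independent uniform configurations and B̄ is the coordinatewise colour-flip of B. -/
import Mathlib


open Finset

/-- `(x, I)` is a witness for `A`: every configuration agreeing with `x` on `I` lies in `A`. -/
def IsWitness {n : ℕ} (A : Set (Fin n → Bool)) (x : Fin n → Bool) (I : Finset (Fin n)) : Prop :=
  ∀ y : Fin n → Bool, (∀ i ∈ I, y i = x i) → y ∈ A

/-- `(A, B)` occurs disjointly on `(x, y)`: there are disjoint witness sets `I` for `A` in `x`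
and `J` for `B` in `y`. -/
def OccursDisjointly {n : ℕ} (A B : Set (Fin n → Bool)) (x y : Fin n → Bool) : Prop :=
  ∃ I J : Finset (Fin n), Disjoint I J ∧ IsWitness A x I ∧ IsWitness B y J

/-- An event is increasing if it is upward closed in the coordinatewise order. -/
def IncreasingEvent {n : ℕ} (A : Set (Fin n → Bool)) : Prop :=
  ∀ x y : Fin n → Bool, (∀ i, x i ≤ y i) → x ∈ A → y ∈ A

/-- Coordinatewise colour flip. -/
def flipConf {n : ℕ} (x : Fin n → Bool) : Fin n → Bool := fun i => !(x i)

/-- `B̄ = {x̄ : x ∈ B}`. -/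
def flipSet {n : ℕ} (B : Set (Fin n → Bool)) : Set (Fin n → Bool) := flipConf '' B

attribute [local instance] Classical.propDecidable

/-- Uniform probability of an event on `{0,1}^n`. -/
noncomputable def Pr {n : ℕ} (A : Set (Fin n → Bool)) : ℝ :=
  ((Finset.univ.filter fun x => x ∈ A).card : ℝ) / 2 ^ n

/-- Probability that `(A,B)` occurs disjointly on an independent uniform pair `(ω, ξ)`. -/
noncomputable def PrPairDisj {n : ℕ} (A B : Set (Fin n → Bool)) : ℝ :=
  (∑ x : Fin n → Bool, ∑ y : Fin n → Bool,
    if OccursDisjointly A B x y then (1:ℝ) else 0) / (2 ^ n * 2 ^ n)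

namespace DualReimerAux

noncomputable def S1 {n : ℕ} (A B : Set (Fin n → Bool)) : ℝ :=
  ∑ x : Fin n → Bool, ∑ y : Fin n → Bool,
    if OccursDisjointly A B x y then (1:ℝ) else 0

noncomputable def S2 {n : ℕ} (T : Set (Fin n → Bool)) : ℝ :=
  ∑ z : Fin n → Bool, if z ∈ T then (1:ℝ) else 0

variable {n : ℕ}

lemma ite_bound {P Q R S : Prop} (hS : S → P ∨ Q) (h1 : R → P) (h2 : R → Q) :
    (if S then (1:ℝ) else 0) ≤
      (if P then 1 else 0) + (if Q then 1 else 0) - (if R then 1 else 0) := by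
  by_cases p : P <;> by_cases q : Q <;> by_cases r : R <;> by_cases s : S <;>
    simp_all <;> norm_num

lemma isWitness_mono {A A' : Set (Fin n → Bool)} (h : A ⊆ A') {x : Fin n → Bool}
    {I : Finset (Fin n)} (hw : IsWitness A x I) : IsWitness A' x I :=
  fun y hy => h (hw y hy)

lemma occursDisjointly_mono {A A' B B' : Set (Fin n → Bool)} (hA : A ⊆ A') (hB : B ⊆ B')
    {x y : Fin n → Bool} (h : OccursDisjointly A B x y) : OccursDisjointly A' B' x y := by
  obtain ⟨I, J, hd, hI, hJ⟩ := h
  exact ⟨I, J, hd, isWitness_mono hA hI, isWitness_mono hB hJ⟩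

def sec (A : Set (Fin (n+1) → Bool)) (b : Bool) : Set (Fin n → Bool) :=
  {x | Fin.cons b x ∈ A}

lemma sec_increasing {A : Set (Fin (n+1) → Bool)} (hA : IncreasingEvent A) (b : Bool) :
    IncreasingEvent (sec A b) := by
  intro x y hxy hx
  refine hA (Fin.cons b x) (Fin.cons b y) ?_ hx
  intro i
  rcases Fin.eq_zero_or_eq_succ i with rfl | ⟨j, rfl⟩
  · simp
  · simpa using hxy j

lemma sec_false_subset {A : Set (Fin (n+1) → Bool)} (hA : IncreasingEvent A) (b : Bool) :
    sec A false ⊆ sec A b := by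
  intro x hx
  refine hA (Fin.cons false x) (Fin.cons b x) ?_ hx
  intro i
  rcases Fin.eq_zero_or_eq_succ i with rfl | ⟨j, rfl⟩
  · simp
  · simp

lemma isWitness_cons {A : Set (Fin (n+1) → Bool)} {a : Bool} {x : Fin n → Bool}
    {I : Finset (Fin (n+1))} (hw : IsWitness A (Fin.cons a x) I) :
    IsWitness (sec A a) x (univ.filter fun i => i.succ ∈ I) := by
  intro y hy
  refine hw (Fin.cons a y) ?_
  intro j hj
  rcases Fin.eq_zero_or_eq_succ j with rfl | ⟨i, rfl⟩
  · simp
  · simpa using hy i (by simp [hj])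

lemma isWitness_cons_of_notMem {A : Set (Fin (n+1) → Bool)} {a c : Bool} {x : Fin n → Bool}
    {I : Finset (Fin (n+1))} (h0 : (0 : Fin (n+1)) ∉ I) (hw : IsWitness A (Fin.cons a x) I) :
    IsWitness (sec A c) x (univ.filter fun i => i.succ ∈ I) := by
  intro y hy
  refine hw (Fin.cons c y) ?_
  intro j hj
  rcases Fin.eq_zero_or_eq_succ j with rfl | ⟨i, rfl⟩
  · exact absurd hj h0
  · simpa using hy i (by simp [hj])

lemma do_cons {A B : Set (Fin (n+1) → Bool)} {a b : Bool} {x y : Fin n → Bool}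
    (h : OccursDisjointly A B (Fin.cons a x) (Fin.cons b y)) :
    OccursDisjointly (sec A a) (sec B false) x y ∨
      OccursDisjointly (sec A false) (sec B b) x y := by
  obtain ⟨I, J, hd, hI, hJ⟩ := h
  have hd' : Disjoint (univ.filter fun i : Fin n => i.succ ∈ I)
      (univ.filter fun i : Fin n => i.succ ∈ J) := by
    rw [Finset.disjoint_left] at hd ⊢
    intro i hi hj
    simp only [mem_filter] at hi hj
    exact hd hi.2 hj.2
  by_cases h0 : (0 : Fin (n+1)) ∈ J
  · right
    have h0I : (0 : Fin (n+1)) ∉ I := fun hI0 => (Finset.disjoint_left.mp hd hI0) h0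
    exact ⟨_, _, hd', isWitness_cons_of_notMem h0I hI, isWitness_cons hJ⟩
  · left
    exact ⟨_, _, hd', isWitness_cons hI, isWitness_cons_of_notMem h0 hJ⟩

lemma flipConf_flipConf (x : Fin n → Bool) : flipConf (flipConf x) = x :=
  funext fun i => Bool.not_not _

lemma mem_flipSet {B : Set (Fin n → Bool)} {x : Fin n → Bool} :
    x ∈ flipSet B ↔ flipConf x ∈ B := by
  constructor
  · rintro ⟨b, hb, rfl⟩; rwa [flipConf_flipConf]
  · intro h; exact ⟨flipConf x, h, flipConf_flipConf x⟩

lemma flipConf_cons (c : Bool) (z : Fin n → Bool) :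
    flipConf (Fin.cons c z) = Fin.cons (!c) (flipConf z) := by
  funext i
  rcases Fin.eq_zero_or_eq_succ i with rfl | ⟨j, rfl⟩ <;> simp [flipConf]

lemma mem_cons_inter {A B : Set (Fin (n+1) → Bool)} {c : Bool} {z : Fin n → Bool} :
    Fin.cons c z ∈ A ∩ flipSet B ↔ z ∈ sec A c ∩ flipSet (sec B (!c)) := by
  simp only [Set.mem_inter_iff, mem_flipSet, flipConf_cons]
  exact Iff.rfl

def consEquiv : Bool × (Fin n → Bool) ≃ (Fin (n+1) → Bool) where
  toFun p := Fin.cons p.1 p.2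
  invFun f := (f 0, fun i => f i.succ)
  left_inv := by rintro ⟨a, x⟩; simp
  right_inv := fun f => Fin.cons_self_tail f

lemma sum_cons (f : (Fin (n+1) → Bool) → ℝ) :
    ∑ x : Fin (n+1) → Bool, f x = ∑ a : Bool, ∑ x : Fin n → Bool, f (Fin.cons a x) := by
  have h := Fintype.sum_equiv (consEquiv (n := n)) (fun p => f (Fin.cons p.1 p.2)) f (fun _ => rfl)
  rw [← h, Fintype.sum_prod_type]

lemma S1_le_of_imp {A B T : Set (Fin n → Bool)}
    (h : ∀ x y, OccursDisjointly A B x y → x ∈ T) :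
    S1 A B ≤ 2 ^ n * S2 T := by
  have step : S1 A B ≤ ∑ x : Fin n → Bool, ∑ _y : Fin n → Bool,
      (if x ∈ T then (1:ℝ) else 0) := by
    apply Finset.sum_le_sum
    intro x _
    apply Finset.sum_le_sum
    intro y _
    by_cases hd : OccursDisjointly A B x y
    · simp [hd, h x y hd]
    · simp only [hd, if_neg, not_false_iff]
      split <;> norm_num
  calc S1 A B ≤ _ := step
    _ = ∑ x : Fin n → Bool, (2 ^ n : ℝ) * (if x ∈ T then 1 else 0) := by
        apply Finset.sum_congr rfl
        intro x _
        rw [Finset.sum_const, Finset.card_univ]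
        simp [Fintype.card_fun, mul_comm]
    _ = 2 ^ n * S2 T := by rw [S2, Finset.mul_sum]

lemma mem_of_isWitness {A : Set (Fin n → Bool)} {x : Fin n → Bool} {I : Finset (Fin n)}
    (h : IsWitness A x I) : x ∈ A := h x fun _ _ => rfl

lemma main : ∀ n (A B : Set (Fin n → Bool)), IncreasingEvent A → IncreasingEvent B →
    S1 A B ≤ 2 ^ n * S2 (A ∩ flipSet B) := by
  intro n
  induction n with
  | zero =>
    intro A B _ _
    apply S1_le_of_imp
    rintro x y ⟨I, J, -, hI, hJ⟩
    refine ⟨mem_of_isWitness hI, ?_⟩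
    rw [mem_flipSet]
    have hxy : flipConf x = y := funext fun i => i.elim0
    rw [hxy]
    exact mem_of_isWitness hJ
  | succ n ih =>
    intro A B hA hB
    have key : ∀ (a b : Bool) (x y : Fin n → Bool),
        (if OccursDisjointly A B (Fin.cons a x) (Fin.cons b y) then (1:ℝ) else 0) ≤
          (if OccursDisjointly (sec A a) (sec B false) x y then (1:ℝ) else 0)
          + (if OccursDisjointly (sec A false) (sec B b) x y then (1:ℝ) else 0)
          - (if OccursDisjointly (sec A false) (sec B false) x y then (1:ℝ) else 0) := by
      intro a b x y
      refine ite_bound do_cons ?_ ?_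
      · exact fun hr => occursDisjointly_mono (sec_false_subset hA a) (le_refl _) hr
      · exact fun hr => occursDisjointly_mono (le_refl _) (sec_false_subset hB b) hr
    have Gbound : ∀ a b : Bool,
        (∑ x : Fin n → Bool, ∑ y : Fin n → Bool,
          if OccursDisjointly A B (Fin.cons a x) (Fin.cons b y) then (1:ℝ) else 0)
        ≤ S1 (sec A a) (sec B false) + S1 (sec A false) (sec B b)
            - S1 (sec A false) (sec B false) := by
      intro a b
      have h1 : (∑ x : Fin n → Bool, ∑ y : Fin n → Bool,
          if OccursDisjointly A B (Fin.cons a x) (Fin.cons b y) then (1:ℝ) else 0)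
          ≤ ∑ x : Fin n → Bool, ∑ y : Fin n → Bool,
            ((if OccursDisjointly (sec A a) (sec B false) x y then (1:ℝ) else 0)
              + (if OccursDisjointly (sec A false) (sec B b) x y then (1:ℝ) else 0)
              - (if OccursDisjointly (sec A false) (sec B false) x y then (1:ℝ) else 0)) := by
        apply Finset.sum_le_sum
        intro x _
        apply Finset.sum_le_sum
        intro y _
        exact key a b x y
      refine h1.trans_eq ?_
      simp only [Finset.sum_add_distrib, Finset.sum_sub_distrib]
      rfl
    have decompose : S1 A B = ∑ a : Bool, ∑ b : Bool, ∑ x : Fin n → Bool, ∑ y : Fin n → Bool,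
        if OccursDisjointly A B (Fin.cons a x) (Fin.cons b y) then (1:ℝ) else 0 := by
      rw [S1, sum_cons]
      apply Finset.sum_congr rfl
      intro a _
      calc (∑ x : Fin n → Bool, ∑ y : Fin (n+1) → Bool,
            if OccursDisjointly A B (Fin.cons a x) y then (1:ℝ) else 0)
          = ∑ x : Fin n → Bool, ∑ b : Bool, ∑ y : Fin n → Bool,
            if OccursDisjointly A B (Fin.cons a x) (Fin.cons b y) then (1:ℝ) else 0 := by
            exact Finset.sum_congr rfl fun x _ => sum_cons _
        _ = _ := Finset.sum_comm
    have rhs : S2 (A ∩ flipSet B) =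
        S2 (sec A true ∩ flipSet (sec B false)) + S2 (sec A false ∩ flipSet (sec B true)) := by
      rw [S2, sum_cons, Fintype.sum_bool]
      congr 1
      · apply Finset.sum_congr rfl
        intro z _
        congr 1
        exact propext (by simpa only [Set.mem_inter_iff, Bool.not_true] using
          (mem_cons_inter (A := A) (B := B) (c := true) (z := z)))
      · apply Finset.sum_congr rfl
        intro z _
        congr 1
        exact propext (by simpa only [Set.mem_inter_iff, Bool.not_false] using
          (mem_cons_inter (A := A) (B := B) (c := false) (z := z)))
    have ih10 := ih (sec A true) (sec B false) (sec_increasing hA true) (sec_increasing hB false)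
    have ih01 := ih (sec A false) (sec B true) (sec_increasing hA false) (sec_increasing hB true)
    have e1 := Gbound false false
    have e2 := Gbound false true
    have e3 := Gbound true false
    have e4 := Gbound true true
    rw [decompose, Fintype.sum_bool]
    rw [Fintype.sum_bool, Fintype.sum_bool, rhs]
    have harith : (2:ℝ) ^ (n+1) *
        (S2 (sec A true ∩ flipSet (sec B false)) + S2 (sec A false ∩ flipSet (sec B true)))
        = 2 * ((2:ℝ)^n * S2 (sec A true ∩ flipSet (sec B false)))
          + 2 * ((2:ℝ)^n * S2 (sec A false ∩ flipSet (sec B true))) := by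
      ring
    linarith

end DualReimerAux


/-- Dual Reimer inequality for increasing events:
`P[(A,B) occurs disjointly on (ω,ξ)] ≤ P[A ∩ B̄]`. -/
theorem dual_reimer {n : ℕ} (A B : Set (Fin n → Bool))
    (hA : IncreasingEvent A) (hB : IncreasingEvent B) :
    PrPairDisj A B ≤ Pr (A ∩ flipSet B) := by
  have h := DualReimerAux.main n A B hA hB
  have hPr : Pr (A ∩ flipSet B) = DualReimerAux.S2 (A ∩ flipSet B) / 2 ^ n := by
    unfold Pr DualReimerAux.S2
    congr 1
    rw [Finset.card_filter]
    push_cast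
    refine Finset.sum_congr rfl fun x _ => ?_
    congr 1
  have hPP : PrPairDisj A B = DualReimerAux.S1 A B / (2 ^ n * 2 ^ n) := rfl
  rw [hPP, hPr]
  have h2 : (0:ℝ) < 2 ^ n := by positivity
  rw [div_le_div_iff₀ (by positivity) h2]
  have h3 := mul_le_mul_of_nonneg_right h h2.le
  have h4 : DualReimerAux.S2 (A ∩ flipSet B) * (2 ^ n * 2 ^ n)
      = 2 ^ n * DualReimerAux.S2 (A ∩ flipSet B) * 2 ^ n := by ring
  rw [h4]
  exact h3
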